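/- Let S be a group, a₁, …, aₙ ∈ S, and suppose S = ⋃_{i=1}^{n} x_i C_S(a_i) for some x₁, …, xₙ ∈ S, where C_S(a) denotes the centralizer of a in S. Then there exists an index i such that the conjugacy class of a_i in S is finite. -/

import Mathlib

open scoped Pointwise

/-- If `S` is covered by finitely many left cosets of centralizers of elements
`a i`, then some `a i` has a finite conjugacy class. -/
theorem finite_conjugacy_class_of_centralizer_coset_cover {S : Type*} [Group S]
    (n : ℕ) (a x : Fin n → S)
    (hcov : ∀ g : S, ∃ i : Fin n, (x i)⁻¹ * g ∈ Subgroup.centralizer {a i}) :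
    ∃ i : Fin n, {h : S | ∃ g : S, g⁻¹ * a i * g = h}.Finite := by
  classical
  have hcovers : ⋃ i ∈ (Finset.univ : Finset (Fin n)),
      x i • (Subgroup.centralizer {a i} : Set S) = Set.univ := by
    ext g
    simp only [Set.mem_iUnion, Set.mem_univ, iff_true, Finset.mem_univ, exists_prop, true_and]
    obtain ⟨i, hi⟩ := hcov g
    exact ⟨i, ⟨(x i)⁻¹ * g, hi, by simp [smul_eq_mul]⟩⟩
  obtain ⟨i, -, hfin⟩ := Subgroup.exists_finiteIndex_of_leftCoset_cover hcovers
  refine ⟨i, ?_⟩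
  have hidx : (MulAction.stabilizer (ConjAct S) (a i)).index
      = (Subgroup.centralizer ({a i} : Set S)).index := by
    rw [Subgroup.centralizer_eq_comap_stabilizer]
    exact (Subgroup.index_comap_of_surjective _ (ConjAct.toConjAct (G := S)).surjective).symm
  haveI : (MulAction.stabilizer (ConjAct S) (a i)).FiniteIndex :=
    ⟨by rw [hidx]; exact hfin.index_ne_zero⟩
  have horb : (MulAction.orbit (ConjAct S) (a i)).Finite :=
    Set.finite_coe_iff.mp <|
      Finite.of_equiv _ (MulAction.orbitEquivQuotientStabilizer (ConjAct S) (a i)).symm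
  refine horb.subset ?_
  rintro h ⟨g, rfl⟩
  refine ⟨ConjAct.toConjAct g⁻¹, ?_⟩
  show ConjAct.toConjAct g⁻¹ • a i = g⁻¹ * a i * g
  rw [ConjAct.toConjAct_smul]; group
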